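/- Under the hypotheses of the previous theorem, the two explicit expressions for the urn model I probability agree: (∏_{h=1}^{m} β_h)·(∏_{h=k+1}^{n} α_h)·Σ_{ℓ=1}^{m} 1/((∏_{j=k}^{n}(α_j+β_ℓ))·(∏_{i=1, i≠ℓ}^{m}(β_i-β_ℓ))) = (∏_{h=1}^{m} β_h)·(∏_{h=k+1}^{n} α_h)·Σ_{ℓ=k}^{n} 1/((∏_{j=k, j≠ℓ}^{n}(α_j-α_ℓ))·(∏_{i=1}^{m}(β_i+α_ℓ))). -/

import Mathlib

open Finset Polynomial

set_option maxHeartbeats 800000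

lemma leadingCoeff_basisDivisor (x y : ℝ) :
    (Lagrange.basisDivisor x y).leadingCoeff = (x - y)⁻¹ := by
  rw [Lagrange.basisDivisor, leadingCoeff_mul, leadingCoeff_C,
    (monic_X_sub_C y).leadingCoeff, mul_one]

lemma sum_nodalWeight_eq_zero {ι : Type*} [DecidableEq ι] (s : Finset ι) (v : ι → ℝ)
    (hvs : Set.InjOn v s) (hs : 2 ≤ s.card) :
    ∑ i ∈ s, ∏ j ∈ s.erase i, (v i - v j)⁻¹ = 0 := by
  have hne : s.Nonempty := Finset.card_pos.mp (by omega)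
  have h1 := Lagrange.sum_basis hvs hne
  have h2 := congrArg (fun p => Polynomial.coeff p (s.card - 1)) h1
  simp only [Polynomial.finset_sum_coeff] at h2
  have hc1 : (1 : ℝ[X]).coeff (s.card - 1) = 0 := by
    rw [Polynomial.coeff_one, if_neg (by omega)]
  rw [hc1] at h2
  rw [← h2]
  refine Finset.sum_congr rfl fun i hi => ?_
  have hdeg : (Lagrange.basis s v i).natDegree = s.card - 1 :=
    Lagrange.natDegree_basis hvs hi
  rw [← hdeg, Polynomial.coeff_natDegree]
  rw [Lagrange.basis, Polynomial.leadingCoeff_prod]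
  exact (Finset.prod_congr rfl fun j _ => leadingCoeff_basisDivisor _ _).symm

/-- Equality of the two explicit expressions for the urn model I probability. -/
theorem urn_model_I_two_forms (α β : ℕ → ℝ) (hα0 : α 0 = 0)
    (hα : ∀ i, 1 ≤ i → 0 < α i) (hβ : ∀ i, 1 ≤ i → 0 < β i)
    (hαdist : ∀ i j, i ≠ j → α i ≠ α j)
    (hβdist : ∀ i j, 1 ≤ i → 1 ≤ j → i ≠ j → β i ≠ β j)
    (n m k : ℕ) (hn : 1 ≤ n) (hm : 1 ≤ m) (hk : k ≤ n) :
    (∏ h ∈ Finset.Icc 1 m, β h) * (∏ h ∈ Finset.Icc (k + 1) n, α h) *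
        ∑ l ∈ Finset.Icc 1 m,
          1 / ((∏ j ∈ Finset.Icc k n, (α j + β l)) *
            ∏ i ∈ (Finset.Icc 1 m).erase l, (β i - β l)) =
      (∏ h ∈ Finset.Icc 1 m, β h) * (∏ h ∈ Finset.Icc (k + 1) n, α h) *
        ∑ l ∈ Finset.Icc k n,
          1 / ((∏ j ∈ (Finset.Icc k n).erase l, (α j - α l)) *
            ∏ i ∈ Finset.Icc 1 m, (β i + α l)) := by
  have hαnn : ∀ j, 0 ≤ α j := by
    intro j
    rcases Nat.eq_zero_or_pos j with h | h
    · simp [h, hα0]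
    · exact (hα j h).le
  have hvs : Set.InjOn (Sum.elim β (fun j => -α j))
      ((Finset.Icc 1 m).disjSum (Finset.Icc k n)) := by
    rintro (i | j) hx (i' | j') hy h
    · simp only [Sum.elim_inl] at h
      have hi : i ∈ Finset.Icc 1 m := by simpa using hx
      have hi' : i' ∈ Finset.Icc 1 m := by simpa using hy
      by_contra hne
      exact hβdist i i' (Finset.mem_Icc.mp hi).1 (Finset.mem_Icc.mp hi').1
        (by simpa using hne) h
    · exfalso
      simp only [Sum.elim_inl, Sum.elim_inr] at h
      have hi : i ∈ Finset.Icc 1 m := by simpa using hx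
      have : (0:ℝ) < β i := hβ i (Finset.mem_Icc.mp hi).1
      nlinarith [hαnn j']
    · exfalso
      simp only [Sum.elim_inl, Sum.elim_inr] at h
      have hi : i' ∈ Finset.Icc 1 m := by simpa using hy
      have : (0:ℝ) < β i' := hβ i' (Finset.mem_Icc.mp hi).1
      nlinarith [hαnn j]
    · simp only [Sum.elim_inr, neg_inj] at h
      by_contra hne
      exact hαdist j j' (by simpa using hne) h
  have hcard : 2 ≤ ((Finset.Icc 1 m).disjSum (Finset.Icc k n)).card := by
    rw [Finset.card_disjSum, Nat.card_Icc, Nat.card_Icc]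
    omega
  have hkey := sum_nodalWeight_eq_zero _ _ hvs hcard
  rw [Finset.sum_disjSum] at hkey
  have herase_l : ∀ l : ℕ, ((Finset.Icc 1 m).disjSum (Finset.Icc k n)).erase (Sum.inl l)
      = ((Finset.Icc 1 m).erase l).disjSum (Finset.Icc k n) := by
    intro l; ext (i | j) <;> simp [and_comm]
  have herase_r : ∀ l : ℕ, ((Finset.Icc 1 m).disjSum (Finset.Icc k n)).erase (Sum.inr l)
      = (Finset.Icc 1 m).disjSum ((Finset.Icc k n).erase l) := by
    intro l; ext (i | j) <;> simp [and_comm]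
  simp only [herase_l, herase_r, Finset.prod_disjSum, Sum.elim_inl, Sum.elim_inr,
    sub_neg_eq_add] at hkey
  have hL : ∀ l ∈ Finset.Icc 1 m,
      (∏ j ∈ (Finset.Icc 1 m).erase l, (β l - β j)⁻¹) *
        ∏ j ∈ Finset.Icc k n, (β l + α j)⁻¹
      = (-1 : ℝ)^(m-1) * (1 / ((∏ j ∈ Finset.Icc k n, (α j + β l)) *
          ∏ i ∈ (Finset.Icc 1 m).erase l, (β i - β l))) := by
    intro l hl
    have hcardE : ((Finset.Icc 1 m).erase l).card = m - 1 := by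
      rw [Finset.card_erase_of_mem hl, Nat.card_Icc]; omega
    have h1 : ∏ j ∈ (Finset.Icc 1 m).erase l, (β l - β j)⁻¹
        = (-1:ℝ)^(m-1) * ∏ j ∈ (Finset.Icc 1 m).erase l, (β j - β l)⁻¹ := by
      calc ∏ j ∈ (Finset.Icc 1 m).erase l, (β l - β j)⁻¹
          = ∏ j ∈ (Finset.Icc 1 m).erase l, (-1 * (β j - β l)⁻¹) :=
            Finset.prod_congr rfl fun i _ => by
              rw [neg_one_mul, ← neg_sub (β i) (β l), inv_neg]
        _ = (-1:ℝ)^(m-1) * ∏ j ∈ (Finset.Icc 1 m).erase l, (β j - β l)⁻¹ := by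
            rw [Finset.prod_mul_distrib, Finset.prod_const, hcardE]
    have h2 : ∏ j ∈ Finset.Icc k n, (β l + α j)⁻¹
        = ∏ j ∈ Finset.Icc k n, (α j + β l)⁻¹ :=
      Finset.prod_congr rfl fun j _ => by rw [add_comm]
    rw [h1, h2, one_div, mul_inv, ← Finset.prod_inv_distrib, ← Finset.prod_inv_distrib]
    ring
  have hR : ∀ l ∈ Finset.Icc k n,
      (∏ i ∈ Finset.Icc 1 m, (-α l - β i)⁻¹) *
        ∏ j ∈ (Finset.Icc k n).erase l, (-α l + α j)⁻¹
      = -((-1 : ℝ)^(m-1)) * (1 / ((∏ j ∈ (Finset.Icc k n).erase l, (α j - α l)) *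
          ∏ i ∈ Finset.Icc 1 m, (β i + α l))) := by
    intro l hl
    have hcardm : (Finset.Icc 1 m).card = m := by rw [Nat.card_Icc]; omega
    have h1 : ∏ i ∈ Finset.Icc 1 m, (-α l - β i)⁻¹
        = (-1:ℝ)^m * ∏ i ∈ Finset.Icc 1 m, (β i + α l)⁻¹ := by
      calc ∏ i ∈ Finset.Icc 1 m, (-α l - β i)⁻¹
          = ∏ i ∈ Finset.Icc 1 m, (-1 * (β i + α l)⁻¹) :=
            Finset.prod_congr rfl fun i _ => by
              rw [neg_one_mul, ← inv_neg]
              congr 1; ring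
        _ = (-1:ℝ)^m * ∏ i ∈ Finset.Icc 1 m, (β i + α l)⁻¹ := by
            rw [Finset.prod_mul_distrib, Finset.prod_const, hcardm]
    have h2 : ∏ j ∈ (Finset.Icc k n).erase l, (-α l + α j)⁻¹
        = ∏ j ∈ (Finset.Icc k n).erase l, (α j - α l)⁻¹ :=
      Finset.prod_congr rfl fun j _ => by rw [neg_add_eq_sub]
    have hm1 : (-1:ℝ)^m = -(-1:ℝ)^(m-1) := by
      conv_lhs => rw [show m = (m-1) + 1 by omega]
      rw [pow_succ]; ring
    rw [h1, h2, hm1, one_div, mul_inv, ← Finset.prod_inv_distrib, ← Finset.prod_inv_distrib]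
    ring
  rw [Finset.sum_congr rfl hL, Finset.sum_congr rfl hR, ← Finset.mul_sum,
    ← Finset.mul_sum] at hkey
  have hne : ((-1:ℝ)^(m-1)) ≠ 0 := by positivity
  have hz : ((-1:ℝ)^(m-1)) * ((∑ l ∈ Finset.Icc 1 m,
      1 / ((∏ j ∈ Finset.Icc k n, (α j + β l)) *
        ∏ i ∈ (Finset.Icc 1 m).erase l, (β i - β l)))
      - ∑ l ∈ Finset.Icc k n,
        1 / ((∏ j ∈ (Finset.Icc k n).erase l, (α j - α l)) *
          ∏ i ∈ Finset.Icc 1 m, (β i + α l))) = 0 := by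
    linear_combination hkey
  have hsumeq := sub_eq_zero.mp ((mul_eq_zero.mp hz).resolve_left hne)
  rw [hsumeq]
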